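/- (Rate of a lifted caching scheme) If there exists a (K, f, Z, S) placement delivery array, then there is a coded caching scheme for K users and N files in which each file is split into f equal subfiles, each user caches exactly NZ/f subfile-equivalents (M/N = Z/f), and for every demand vector the server transmission consists of |S| coded packets each of size F/f, achieving rate R = |S|/f, such that every user can recover its demanded file from its cache and the transmissions. -/
import Mathlib


open Finset

/-- Number of stars (`none`) in column `k` of the array `P`. -/
def colStars {f K : ℕ} (P : Fin f → Fin K → Option ℕ) (k : Fin K) : ℕ :=
  (Finset.univ.filter fun j => P j k = none).card

/-- `P` is a `(K, f, Z, S)` placement delivery array: an `f × K` array over `{∗} ∪ S`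
(`none` encodes `∗`) with exactly `Z` stars in each column, every integer of `S`
occurring at least once (and all integer entries lying in `S`), satisfying the
Blackburn property. -/
def IsPDA {f K : ℕ} (P : Fin f → Fin K → Option ℕ) (Z : ℕ) (S : Finset ℕ) : Prop :=
  (∀ k, colStars P k = Z) ∧
  (∀ s ∈ S, ∃ j k, P j k = some s) ∧
  (∀ j k s, P j k = some s → s ∈ S) ∧
  (∀ j₁ k₁ j₂ k₂ s, (j₁, k₁) ≠ (j₂, k₂) →
    P j₁ k₁ = some s → P j₂ k₂ = some s → P j₁ k₂ = none ∧ P j₂ k₁ = none)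

/-- Every integer of `S` appears exactly `g` times in the array `P`. -/
def IsRegularPDA {f K : ℕ} (P : Fin f → Fin K → Option ℕ) (S : Finset ℕ) (g : ℕ) : Prop :=
  ∀ s ∈ S, ((Finset.univ : Finset (Fin f × Fin K)).filter
    (fun jk => P jk.1 jk.2 = some s)).card = g

/-- `P₀` and `P₁` are Blackburn-compatible with respect to `Pstar`. -/
def BBCompat {n m : ℕ} (P₀ P₁ Pstar : Fin n → Fin m → Option ℕ) : Prop :=
  ∀ i₀ j₀ i₁ j₁ s, P₀ i₀ j₀ = some s → P₁ i₁ j₁ = some s →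
    Pstar i₀ j₁ = none ∧ Pstar i₁ j₀ = none

/-- `Ig n t` is the `n × n` array with the integer `t` on the main diagonal and `∗`
elsewhere. -/
def Ig (n t : ℕ) : Fin n → Fin n → Option ℕ := fun i j => if i = j then some t else none

/-- Block-row index of a global index for an array built from `a × a` grids of `b`-sized
blocks. -/
def blkIdx {a b : ℕ} (j : Fin (a * b)) : Fin a :=
  ⟨(j : ℕ) / b, Nat.div_lt_of_lt_mul (Nat.mul_comm a b ▸ j.isLt)⟩

/-- Within-block index of a global index. -/
def inIdx {a b : ℕ} (j : Fin (a * b)) : Fin b :=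
  ⟨(j : ℕ) % b, Nat.mod_lt _ (by
    rcases Nat.eq_zero_or_pos b with h | h
    · exact absurd j.isLt (by simp [h])
    · exact h)⟩

/-- Decoder for the lifted caching scheme. -/
noncomputable def pdaDec {K f N : ℕ} (S : Finset ℕ) (P : Fin f → Fin K → Option ℕ)
    (G : Type*) [AddCommGroup G] (k : Fin K) (D : Fin K → Fin N)
    (cache : Fin N → Fin f → G) (pkt : {s // s ∈ S} → G) (j : Fin f) : G :=
  match P j k with
  | none => cache (D k) j
  | some s =>
      (if hs : s ∈ S then pkt ⟨s, hs⟩ else 0) -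
        ∑ jk ∈ (Finset.univ : Finset (Fin f × Fin K)).erase (j, k),
          if P jk.1 jk.2 = some s then cache (D jk.2) jk.1 else 0

/-- **Rate of a lifted caching scheme.** Given a `(K, f, Z, S)` PDA `P`,
there is a coded caching scheme for `K` users and `N` files (each split into `f`
subfiles, with values in an additive group `G`): user `k` caches exactly the subfiles
`W i j` with `P j k = ∗` (so `M/N = Z/f`), and for every demand vector `D` and every
choice of files, the server's `|S|` coded packets (one per integer, giving rate
`R = |S|/f`), each the XOR/sum of the demanded subfiles at the cells carrying that
integer, together with the cache contents, allow every user `k` to decode its full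
demanded file `W (D k)`. -/

theorem stmt_19 {K f Z N : ℕ} (S : Finset ℕ) (P : Fin f → Fin K → Option ℕ)
    (hP : IsPDA P Z S) (G : Type*) [AddCommGroup G] :
    ∃ dec : Fin K →                 -- the user
        (Fin K → Fin N) →           -- the demand vector
        (Fin N → Fin f → G) →       -- the user's cache contents (0 outside stars)
        ({s // s ∈ S} → G) →        -- the |S| transmitted coded packets
        (Fin f → G),                -- the decoded demanded file
      ∀ (W : Fin N → Fin f → G) (D : Fin K → Fin N) (k : Fin K),
        dec k D
          (fun i j => if P j k = none then W i j else 0)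
          (fun s => ∑ jk : Fin f × Fin K,
            if P jk.1 jk.2 = some s.1 then W (D jk.2) jk.1 else 0)
          = W (D k) := by
  obtain ⟨h1, h2, h3, hBB⟩ := hP
  refine ⟨pdaDec S P G, ?_⟩
  intro W D k
  funext j
  unfold pdaDec
  rcases hPj : P j k with _ | s
  · simp [hPj]
  · simp only
    have hs : s ∈ S := h3 j k s hPj
    rw [dif_pos hs]
    have hsplit : ∑ jk : Fin f × Fin K,
        (if P jk.1 jk.2 = some s then W (D jk.2) jk.1 else 0)
        = W (D k) j + ∑ jk ∈ (Finset.univ : Finset (Fin f × Fin K)).erase (j, k),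
            (if P jk.1 jk.2 = some s then W (D jk.2) jk.1 else 0) := by
      rw [← Finset.add_sum_erase _ _ (Finset.mem_univ (j, k))]
      simp [hPj]
    rw [hsplit]
    have hterm : ∀ jk ∈ (Finset.univ : Finset (Fin f × Fin K)).erase (j, k),
        (if P jk.1 jk.2 = some s then
            (if P jk.1 k = none then W (D jk.2) jk.1 else 0) else 0)
        = (if P jk.1 jk.2 = some s then W (D jk.2) jk.1 else 0) := by
      intro jk hjk
      rcases hPjk : P jk.1 jk.2 with _ | t
      · simp
      · by_cases hts : t = s
        · subst hts
          simp only [if_pos rfl]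
          have hne : (jk.1, jk.2) ≠ (j, k) := by
            have := Finset.ne_of_mem_erase hjk
            simpa using this
          have := (hBB jk.1 jk.2 j k t hne hPjk hPj).1
          simp [this]
        · simp [hPjk, hts]
    rw [Finset.sum_congr rfl hterm]
    abel
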